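/- arXiv:1110.5990 — 2 statements merged into one kernel-verified Lean document; each statement's English description precedes it below -/
import Mathlib

section
/- Suppose u : [a, b] → ℝ is absolutely continuous with u(b) = 0 and 0 ≤ a < b. Then ∫_a^b |u(r)|² dr ≤ 4 ∫_a^b |u'(r)|² r² dr. -/
open MeasureTheory intervalIntegral

open scoped ENNReal

/-- Pointwise weighted Cauchy–Schwarz step for the Hardy inequality. -/
lemma hardy_ptwise (b : ℝ) (u' : ℝ → ℝ) (r : ℝ) (hr0 : 0 < r) (hrb : r ≤ b)
    (hu'r : IntervalIntegrable u' volume r b) :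
    ENNReal.ofReal ((∫ t in r..b, |u' t|) ^ 2) ≤
      (∫⁻ t in Set.Ioc r b, ENNReal.ofReal (|u' t| ^ 2 * t ^ ((3:ℝ)/2))) *
        ENNReal.ofReal (2 * r ^ (-((1:ℝ)/2))) := by
  set ν := volume.restrict (Set.Ioc r b) with hν
  set w : ℝ → ℝ≥0∞ := fun t => ENNReal.ofReal (|u' t| * t ^ ((3:ℝ)/4)) with hw
  set v : ℝ → ℝ≥0∞ := fun t => ENNReal.ofReal (t ^ (-((3:ℝ)/4))) with hv
  have habs : AEMeasurable (fun t => |u' t|) ν := hu'r.abs.1.aestronglyMeasurable.aemeasurable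
  have hwm : AEMeasurable w ν :=
    (habs.mul (measurable_id.pow_const _).aemeasurable).ennreal_ofReal
  have hvm : AEMeasurable v ν := ((measurable_id.pow_const _).aemeasurable).ennreal_ofReal
  have hpq : Real.HolderConjugate 2 2 := Real.HolderConjugate.two_two
  have holder := ENNReal.lintegral_mul_le_Lp_mul_Lq ν hpq hwm hvm
  have hmem : ∀ᵐ t ∂ν, t ∈ Set.Ioc r b := ae_restrict_mem measurableSet_Ioc
  have hsplit : ∫⁻ t, ENNReal.ofReal |u' t| ∂ν = ∫⁻ t, (w * v) t ∂ν := by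
    refine lintegral_congr_ae (hmem.mono fun t ht => ?_)
    have ht0 : 0 < t := hr0.trans ht.1
    simp only [Pi.mul_apply, hw, hv]
    rw [← ENNReal.ofReal_mul (by positivity), mul_assoc, ← Real.rpow_add ht0]
    norm_num
  have hw2 : ∫⁻ t, w t ^ (2:ℝ) ∂ν
      = ∫⁻ t in Set.Ioc r b, ENNReal.ofReal (|u' t| ^ 2 * t ^ ((3:ℝ)/2)) := by
    refine lintegral_congr_ae (hmem.mono fun t ht => ?_)
    have ht0 : 0 < t := hr0.trans ht.1
    show ENNReal.ofReal (|u' t| * t ^ ((3:ℝ)/4)) ^ (2:ℝ)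
        = ENNReal.ofReal (|u' t| ^ 2 * t ^ ((3:ℝ)/2))
    rw [ENNReal.ofReal_rpow_of_nonneg (by positivity) (by norm_num : (0:ℝ) ≤ 2)]
    congr 1
    rw [show ((2:ℝ)) = ((2:ℕ):ℝ) by norm_num, Real.rpow_natCast, mul_pow,
      ← Real.rpow_natCast (t ^ ((3:ℝ)/4)) 2, ← Real.rpow_mul ht0.le]
    norm_num
  have hv2 : ∫⁻ t, v t ^ (2:ℝ) ∂ν
      = ∫⁻ t in Set.Ioc r b, ENNReal.ofReal (t ^ (-((3:ℝ)/2))) := by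
    refine lintegral_congr_ae (hmem.mono fun t ht => ?_)
    have ht0 : 0 < t := hr0.trans ht.1
    show ENNReal.ofReal (t ^ (-((3:ℝ)/4))) ^ (2:ℝ) = ENNReal.ofReal (t ^ (-((3:ℝ)/2)))
    rw [ENNReal.ofReal_rpow_of_nonneg (by positivity) (by norm_num : (0:ℝ) ≤ 2)]
    congr 1
    rw [← Real.rpow_mul ht0.le]
    norm_num
  have h0notin : (0:ℝ) ∉ Set.uIcc r b := by
    rw [Set.uIcc_of_le hrb]
    exact fun h => absurd h.1 (not_le.2 hr0)
  have hBint : IntervalIntegrable (fun t : ℝ => t ^ (-((3:ℝ)/2))) volume r b :=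
    intervalIntegral.intervalIntegrable_rpow (Or.inr h0notin)
  have hBval : ∫ t in r..b, t ^ (-((3:ℝ)/2)) ≤ 2 * r ^ (-((1:ℝ)/2)) := by
    rw [integral_rpow (Or.inr ⟨by norm_num, h0notin⟩)]
    have h1 : -((3:ℝ)/2) + 1 = -((1:ℝ)/2) := by norm_num
    rw [h1]
    have hb0 : (0:ℝ) ≤ b ^ (-((1:ℝ)/2)) := Real.rpow_nonneg (hr0.le.trans hrb) _
    have hr' : (0:ℝ) ≤ r ^ (-((1:ℝ)/2)) := Real.rpow_nonneg hr0.le _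
    rw [div_le_iff_of_neg (by norm_num : -((1:ℝ)/2) < 0)]
    nlinarith
  have hB : ∫⁻ t in Set.Ioc r b, ENNReal.ofReal (t ^ (-((3:ℝ)/2)))
      ≤ ENNReal.ofReal (2 * r ^ (-((1:ℝ)/2))) := by
    rw [← ofReal_integral_eq_lintegral_ofReal hBint.1
      ((ae_restrict_mem measurableSet_Ioc).mono fun t ht =>
        Real.rpow_nonneg ((hr0.trans ht.1).le) _)]
    refine ENNReal.ofReal_le_ofReal ?_
    rwa [← intervalIntegral.integral_of_le hrb]
  -- assemble
  have hnn : 0 ≤ ∫ t in r..b, |u' t| :=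
    intervalIntegral.integral_nonneg hrb fun t _ => abs_nonneg _
  rw [ENNReal.ofReal_pow hnn]
  have h1 : ENNReal.ofReal (∫ t in r..b, |u' t|) = ∫⁻ t, ENNReal.ofReal |u' t| ∂ν := by
    rw [intervalIntegral.integral_of_le hrb,
      ofReal_integral_eq_lintegral_ofReal hu'r.abs.1
        (Filter.Eventually.of_forall fun t => abs_nonneg _)]
  have hsq : ∀ X : ℝ≥0∞, (X ^ ((1:ℝ)/2)) ^ (2:ℕ) = X := fun X => by
    rw [← ENNReal.rpow_natCast _ 2, ← ENNReal.rpow_mul]; norm_num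
  calc ENNReal.ofReal (∫ t in r..b, |u' t|) ^ 2
      = (∫⁻ t, (w * v) t ∂ν) ^ 2 := by rw [h1, hsplit]
    _ ≤ ((∫⁻ t, w t ^ (2:ℝ) ∂ν) ^ ((1:ℝ)/2) * (∫⁻ t, v t ^ (2:ℝ) ∂ν) ^ ((1:ℝ)/2)) ^ 2 :=
        pow_le_pow_left₀ zero_le holder 2
    _ = (∫⁻ t, w t ^ (2:ℝ) ∂ν) * (∫⁻ t, v t ^ (2:ℝ) ∂ν) := by
        rw [mul_pow, hsq, hsq]
    _ ≤ (∫⁻ t in Set.Ioc r b, ENNReal.ofReal (|u' t| ^ 2 * t ^ ((3:ℝ)/2))) *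
        ENNReal.ofReal (2 * r ^ (-((1:ℝ)/2))) := by
        rw [hw2, hv2]
        exact mul_le_mul_right hB _

/-- One-dimensional Hardy inequality: if `u` is absolutely continuous on
`[a, b] ⊂ [0, ∞)` (i.e. `u(x) = −∫_x^b u'` with `u'` integrable, so `u(b)=0`),
then `∫_a^b |u|² ≤ 4 ∫_a^b |u'|² r²`. -/
theorem hardy_inequality_one_dim
    (a b : ℝ) (ha : 0 ≤ a) (hab : a < b)
    (u u' : ℝ → ℝ)
    (hu' : IntervalIntegrable u' volume a b)
    (hAC : ∀ x ∈ Set.Icc a b, u x = -∫ t in x..b, u' t)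
    (hub : u b = 0)
    (husq : IntervalIntegrable (fun r => |u r| ^ 2) volume a b)
    (hu'sq : IntervalIntegrable (fun r => |u' r| ^ 2 * r ^ 2) volume a b) :
    (∫ r in a..b, |u r| ^ 2) ≤ 4 * ∫ r in a..b, |u' r| ^ 2 * r ^ 2 := by
  set I := Set.Ioc a b with hIdef
  set F : ℝ → ℝ≥0∞ := fun t => ENNReal.ofReal (|u' t| ^ 2 * t ^ ((3:ℝ)/2)) with hF
  set c : ℝ → ℝ≥0∞ := fun r => ENNReal.ofReal (2 * r ^ (-((1:ℝ)/2))) with hc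
  have hu'm : AEMeasurable u' (volume.restrict I) := hu'.1.aestronglyMeasurable.aemeasurable
  have hFm : AEMeasurable F (volume.restrict I) :=
    ((hu'.abs.1.aestronglyMeasurable.aemeasurable.pow_const 2).mul (measurable_id.pow_const _).aemeasurable).ennreal_ofReal
  have hcm : Measurable c := (measurable_const.mul (measurable_id.pow_const _)).ennreal_ofReal
  -- Step 1: pointwise bound
  have step1 : ∀ r ∈ I, ENNReal.ofReal (|u r| ^ 2) ≤ (∫⁻ t in Set.Ioc r b, F t) * c r := by
    intro r hr
    have hr0 : 0 < r := ha.trans_lt hr.1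
    have hu'r : IntervalIntegrable u' volume r b :=
      hu'.mono_set (Set.uIcc_subset_uIcc
        (by rw [Set.uIcc_of_le hab.le]; exact ⟨hr.1.le, hr.2⟩)
        (by rw [Set.uIcc_of_le hab.le]; exact ⟨hab.le, le_rfl⟩))
    refine le_trans (ENNReal.ofReal_le_ofReal ?_) (hardy_ptwise b u' r hr0 hr.2 hu'r)
    have habs : |u r| ≤ ∫ t in r..b, |u' t| := by
      rw [hAC r ⟨hr.1.le, hr.2⟩, abs_neg]
      exact intervalIntegral.abs_integral_le_integral_abs hr.2
    exact pow_le_pow_left₀ (abs_nonneg _) habs 2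
  set L := ∫⁻ r in I, ENNReal.ofReal (|u r| ^ 2) with hL
  set R := ∫⁻ t in I, ENNReal.ofReal (|u' t| ^ 2 * t ^ 2) with hR
  -- Step 2: L ≤ K
  have step2 : L ≤ ∫⁻ r in I, (∫⁻ t in Set.Ioc r b, F t) * c r :=
    lintegral_mono_ae ((ae_restrict_mem measurableSet_Ioc).mono fun r hr => step1 r hr)
  -- rewrite inner integral with indicator
  have hinner : ∀ r ∈ I, (∫⁻ t in Set.Ioc r b, F t) * c r
      = ∫⁻ t in I, (Set.Ioi r).indicator F t * c r := by
    intro r hr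
    have hseteq : Set.Ioi r ∩ I = Set.Ioc r b := by
      ext t
      simp only [Set.mem_inter_iff, Set.mem_Ioi, Set.mem_Ioc, hIdef]
      exact ⟨fun ⟨h1, _, h3⟩ => ⟨h1, h3⟩, fun ⟨h1, h2⟩ => ⟨h1, hr.1.trans h1, h2⟩⟩
    rw [lintegral_mul_const'' _ (hFm.indicator measurableSet_Ioi),
      lintegral_indicator measurableSet_Ioi _, Measure.restrict_restrict measurableSet_Ioi,
      hseteq]
  have step3 : (∫⁻ r in I, (∫⁻ t in Set.Ioc r b, F t) * c r)
      = ∫⁻ r in I, ∫⁻ t in I, (Set.Ioi r).indicator F t * c r :=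
    lintegral_congr_ae ((ae_restrict_mem measurableSet_Ioc).mono fun r hr => hinner r hr)
  -- Tonelli swap
  have hswap : (∫⁻ r in I, ∫⁻ t in I, (Set.Ioi r).indicator F t * c r)
      = ∫⁻ t in I, ∫⁻ r in I, (Set.Ioi r).indicator F t * c r := by
    have huncurry : (Function.uncurry fun r t => (Set.Ioi r).indicator F t * c r)
        = fun p : ℝ × ℝ => {q : ℝ × ℝ | q.1 < q.2}.indicator (fun q => F q.2) p * c p.1 := by
      funext p
      simp [Function.uncurry, Set.indicator_apply, Set.mem_Ioi, Set.mem_setOf_eq]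
    exact lintegral_lintegral_swap (by
      rw [huncurry]
      exact ((hFm.comp_snd.indicator (measurableSet_lt measurable_fst measurable_snd)).mul
        ((hcm.comp measurable_fst).aemeasurable)))
  -- inner integral in r
  have hinner2 : ∀ t ∈ I, (∫⁻ r in I, (Set.Ioi r).indicator F t * c r)
      ≤ 4 * ENNReal.ofReal (|u' t| ^ 2 * t ^ 2) := by
    intro t ht
    have ht0 : 0 < t := ha.trans_lt ht.1
    have heq : (fun r => (Set.Ioi r).indicator F t * c r)
        = fun r => (Set.Iio t).indicator (fun r => F t * c r) r := by
      funext r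
      simp only [Set.indicator_apply, Set.mem_Ioi, Set.mem_Iio, ite_mul, zero_mul]
    rw [heq, lintegral_indicator measurableSet_Iio _,
      Measure.restrict_restrict measurableSet_Iio]
    have hset : Set.Iio t ∩ I = Set.Ioo a t := by
      ext r
      simp only [Set.mem_inter_iff, Set.mem_Iio, Set.mem_Ioc, Set.mem_Ioo, hIdef]
      exact ⟨fun ⟨h1, h2, _⟩ => ⟨h2, h1⟩, fun ⟨h1, h2⟩ => ⟨h2, h1, (h2.le.trans ht.2)⟩⟩
    rw [hset, lintegral_const_mul' _ _ ENNReal.ofReal_ne_top]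
    -- bound ∫⁻ r in Ioo a t, c r
    have hcint : IntervalIntegrable (fun r : ℝ => 2 * r ^ (-((1:ℝ)/2))) volume a t :=
      (intervalIntegral.intervalIntegrable_rpow' (by norm_num)).const_mul 2
    have hcval : ∫ r in a..t, 2 * r ^ (-((1:ℝ)/2)) ≤ 4 * t ^ ((1:ℝ)/2) := by
      rw [intervalIntegral.integral_const_mul, integral_rpow (Or.inl (by norm_num))]
      have h1 : -((1:ℝ)/2) + 1 = (1:ℝ)/2 := by norm_num
      rw [h1]
      have ha' : (0:ℝ) ≤ a ^ ((1:ℝ)/2) := Real.rpow_nonneg ha _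
      have htt : (0:ℝ) ≤ t ^ ((1:ℝ)/2) := Real.rpow_nonneg ht0.le _
      rw [div_eq_mul_inv]
      norm_num
      nlinarith [ha', htt]
    have hcbound : (∫⁻ r in Set.Ioo a t, c r) ≤ ENNReal.ofReal (4 * t ^ ((1:ℝ)/2)) := by
      rw [Measure.restrict_congr_set Ioo_ae_eq_Ioc,
        ← ofReal_integral_eq_lintegral_ofReal hcint.1
          ((ae_restrict_mem measurableSet_Ioc).mono fun r hr => by
            have : (0:ℝ) < r := ha.trans_lt hr.1
            positivity)]
      refine ENNReal.ofReal_le_ofReal ?_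
      rwa [← intervalIntegral.integral_of_le ht.1.le]
    calc F t * ∫⁻ r in Set.Ioo a t, c r
        ≤ F t * ENNReal.ofReal (4 * t ^ ((1:ℝ)/2)) := mul_le_mul_right hcbound _
      _ = 4 * ENNReal.ofReal (|u' t| ^ 2 * t ^ 2) := by
          rw [hF, ← ENNReal.ofReal_mul (by positivity)]
          rw [show (4:ℝ≥0∞) = ENNReal.ofReal 4 by norm_num,
            ← ENNReal.ofReal_mul (by norm_num)]
          congr 1
          have hexp : t ^ ((3:ℝ)/2) * t ^ ((1:ℝ)/2) = t ^ 2 := by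
            rw [← Real.rpow_add ht0, show (3:ℝ)/2 + 1/2 = ((2:ℕ):ℝ) by norm_num,
              Real.rpow_natCast]
          rw [← hexp]; ring
  have step4 : (∫⁻ t in I, ∫⁻ r in I, (Set.Ioi r).indicator F t * c r) ≤ 4 * R := by
    rw [hR, ← lintegral_const_mul' 4 _ (by norm_num : (4:ℝ≥0∞) ≠ ⊤)]
    exact lintegral_mono_ae ((ae_restrict_mem measurableSet_Ioc).mono fun t ht => hinner2 t ht)
  have hLR : L ≤ 4 * R := step2.trans (by rw [step3, hswap]; exact step4)
  have hInt : 0 ≤ ∫ r in a..b, |u' r| ^ 2 * r ^ 2 :=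
    intervalIntegral.integral_nonneg hab.le fun r _ => by positivity
  have hRofReal : ENNReal.ofReal (∫ r in a..b, |u' r| ^ 2 * r ^ 2) = R := by
    rw [intervalIntegral.integral_of_le hab.le, hR]
    exact ofReal_integral_eq_lintegral_ofReal hu'sq.1
      (Filter.Eventually.of_forall fun r => by positivity)
  have hRne : (4:ℝ≥0∞) * R ≠ ⊤ := by
    rw [← hRofReal]; exact ENNReal.mul_ne_top (by norm_num) ENNReal.ofReal_ne_top
  have hLeq : ∫ r in a..b, |u r| ^ 2 = L.toReal := by
    rw [intervalIntegral.integral_of_le hab.le, hL,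
      integral_eq_lintegral_of_nonneg_ae (Filter.Eventually.of_forall fun r => by positivity)
        husq.1.aestronglyMeasurable]
  rw [hLeq]
  calc L.toReal ≤ ((4:ℝ≥0∞) * R).toReal := ENNReal.toReal_mono hRne hLR
    _ = 4 * R.toReal := by rw [ENNReal.toReal_mul]; norm_num
    _ = 4 * ∫ r in a..b, |u' r| ^ 2 * r ^ 2 := by
        rw [← hRofReal, ENNReal.toReal_ofReal hInt]
end

section
/- Let ψ₀ > 0, F₀ ∈ ℝ, F₁ ∈ ℂ with F₁ ≠ 0, and c, C > 0. Suppose that for all small ε > 0: (i) for |η − π| ≥ ψ₀ε^{3/2}, Λ₁ᵉ(η) ≤ π² − 2πψ₀ε^{3/2} + ψ₀²ε³ + Cε³ and Λ₂ᵉ(η) ≥ π² + 2πψ₀ε^{3/2} + ψ₀²ε³ − Cε^{3−α} for some α ∈ (0, 1/2]; (ii) for η = π + ψε³ with |ψ|ε^{3/2} ≤ ψ₀, |Λ±ᵉ(η) − π² − ε³(F₀ ± √(4π²ψ² + |F₁|²))| ≤ cε^{7/2}. Then there exists ε₀ > 0 such that for all ε ∈ (0, ε₀] and all η ∈ [0,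 2π), neither Λ₁ᵉ(η) nor Λ₂ᵉ(η) lies in the interval (π² + (F₀ − |F₁|)ε³ + cε^{7/2}, π² + (F₀ + |F₁|)ε³ − cε^{7/2}). -/
open Real

set_option maxHeartbeats 2000000

/-- Gap detection: combining the estimates far from `η = π` (Theorem 4.2) and
near `η = π` (Theorem 4.6), for small `ε` neither of the first two eigenvalue
curves enters the interval
`(π² + (F₀ − |F₁|)ε³ + cε^{7/2}, π² + (F₀ + |F₁|)ε³ − cε^{7/2})`. -/
theorem gap_detection
    (Λ1 Λ2 : ℝ → ℝ → ℝ)  -- Λᵢ ε η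
    (ψ₀ : ℝ) (hψ₀ : 0 < ψ₀) (F₀ : ℝ) (F₁ : ℂ) (hF₁ : F₁ ≠ 0)
    (c C : ℝ) (hc : 0 < c) (hC : 0 < C)
    (α : ℝ) (hα : α ∈ Set.Ioc (0 : ℝ) (1 / 2))
    (ε₁ : ℝ) (hε₁ : 0 < ε₁)
    -- (i) estimates far from π:
    (hfar : ∀ ε : ℝ, 0 < ε → ε ≤ ε₁ → ∀ η ∈ Set.Ico (0 : ℝ) (2 * π),
      ψ₀ * ε ^ ((3 : ℝ) / 2) ≤ |η - π| →
      Λ1 ε η ≤ π ^ 2 - 2 * π * ψ₀ * ε ^ ((3 : ℝ) / 2) + ψ₀ ^ 2 * ε ^ 3 + C * ε ^ 3 ∧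
      Λ2 ε η ≥ π ^ 2 + 2 * π * ψ₀ * ε ^ ((3 : ℝ) / 2) + ψ₀ ^ 2 * ε ^ 3 - C * ε ^ ((3 : ℝ) - α))
    -- (ii) asymptotics near π:
    (hnear : ∀ ε : ℝ, 0 < ε → ε ≤ ε₁ → ∀ ψ : ℝ, |ψ| * ε ^ ((3 : ℝ) / 2) ≤ ψ₀ →
      π + ψ * ε ^ 3 ∈ Set.Ico (0 : ℝ) (2 * π) →
      |Λ1 ε (π + ψ * ε ^ 3) - π ^ 2 -
        ε ^ 3 * (F₀ - Real.sqrt (4 * π ^ 2 * ψ ^ 2 + ‖F₁‖ ^ 2))| ≤ c * ε ^ ((7 : ℝ) / 2) ∧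
      |Λ2 ε (π + ψ * ε ^ 3) - π ^ 2 -
        ε ^ 3 * (F₀ + Real.sqrt (4 * π ^ 2 * ψ ^ 2 + ‖F₁‖ ^ 2))| ≤ c * ε ^ ((7 : ℝ) / 2)) :
    ∃ ε₀ : ℝ, 0 < ε₀ ∧ ∀ ε : ℝ, 0 < ε → ε ≤ ε₀ → ∀ η ∈ Set.Ico (0 : ℝ) (2 * π),
      Λ1 ε η ∉ Set.Ioo (π ^ 2 + (F₀ - ‖F₁‖) * ε ^ 3 + c * ε ^ ((7 : ℝ) / 2))
                        (π ^ 2 + (F₀ + ‖F₁‖) * ε ^ 3 - c * ε ^ ((7 : ℝ) / 2)) ∧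
      Λ2 ε η ∉ Set.Ioo (π ^ 2 + (F₀ - ‖F₁‖) * ε ^ 3 + c * ε ^ ((7 : ℝ) / 2))
                        (π ^ 2 + (F₀ + ‖F₁‖) * ε ^ 3 - c * ε ^ ((7 : ℝ) / 2)) := by

  classical
  set K : ℝ := ψ₀ ^ 2 + C + c + |F₀| + ‖F₁‖ + 1 with hKdef
  have hKpos : 0 < K := by
    have h1 : 0 ≤ |F₀| := abs_nonneg _
    have h2 : 0 ≤ ‖F₁‖ := norm_nonneg _
    positivity
  refine ⟨min ε₁ (min 1 (2 * π * ψ₀ / K)), by positivity, ?_⟩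
  intro ε hε hεle η hη
  have hε1 : ε ≤ ε₁ := le_trans hεle (min_le_left _ _)
  have hεone : ε ≤ 1 := le_trans hεle (le_trans (min_le_right _ _) (min_le_left _ _))
  have hεK : K * ε ≤ 2 * π * ψ₀ := by
    have := le_trans hεle (le_trans (min_le_right _ _) (min_le_right _ _))
    calc K * ε ≤ K * (2 * π * ψ₀ / K) := by
          exact mul_le_mul_of_nonneg_left this hKpos.le
      _ = 2 * π * ψ₀ := by field_simp
  set e : ℝ := ε ^ ((3 : ℝ) / 2) with hedef
  have he : 0 < e := Real.rpow_pos_of_pos hε _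
  have h3pos : (0:ℝ) < ε ^ 3 := by positivity
  have h3r : ε ^ 3 = ε ^ ((3 : ℝ)) := by
    rw [show ((3:ℝ)) = ((3:ℕ):ℝ) by norm_num, Real.rpow_natCast]
  have h52 : ε * e = ε ^ ((5 : ℝ) / 2) := by
    rw [hedef, show ε * ε ^ ((3:ℝ)/2) = ε ^ ((1:ℝ)) * ε ^ ((3:ℝ)/2) by rw [Real.rpow_one],
      ← Real.rpow_add hε]
    norm_num
  have h37 : ε ^ 3 ≤ ε * e := by
    rw [h3r, h52]
    exact Real.rpow_le_rpow_of_exponent_ge hε hεone (by norm_num)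
  have h77 : ε ^ ((7 : ℝ) / 2) ≤ ε * e := by
    rw [h52]
    exact Real.rpow_le_rpow_of_exponent_ge hε hεone (by norm_num)
  have h3a : ε ^ ((3 : ℝ) - α) ≤ ε * e := by
    rw [h52]
    exact Real.rpow_le_rpow_of_exponent_ge hε hεone (by linarith [hα.2])
  have h7pos : (0:ℝ) ≤ ε ^ ((7 : ℝ) / 2) := (Real.rpow_pos_of_pos hε _).le
  have hKe : K * (ε * e) ≤ 2 * π * ψ₀ * e := by
    calc K * (ε * e) = (K * ε) * e := by ring
      _ ≤ 2 * π * ψ₀ * e := mul_le_mul_of_nonneg_right hεK he.le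
  have habsF0 : F₀ ≤ |F₀| := le_abs_self _
  have habsF0' : -|F₀| ≤ F₀ := neg_abs_le _
  have habsF1 : 0 ≤ ‖F₁‖ := norm_nonneg _
  by_cases hcase : ψ₀ * e ≤ |η - π|
  · -- far case
    obtain ⟨h1, h2⟩ := hfar ε hε hε1 η hη hcase
    constructor
    · rintro ⟨hlt, -⟩
      have hcoef : ψ₀ ^ 2 + C - F₀ + ‖F₁‖ ≤ K := by
        rw [hKdef]; nlinarith [sq_nonneg ψ₀]
      have hb : (ψ₀ ^ 2 + C - F₀ + ‖F₁‖) * ε ^ 3 ≤ K * (ε * e) :=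
        le_trans (mul_le_mul_of_nonneg_right hcoef h3pos.le)
          (mul_le_mul_of_nonneg_left h37 hKpos.le)
      nlinarith [mul_nonneg hc.le h7pos]
    · rintro ⟨-, hlt⟩
      have hKC : 0 < K - C := by rw [hKdef]; nlinarith
      have hcoef : F₀ + ‖F₁‖ ≤ K - C := by
        rw [hKdef]; nlinarith [sq_nonneg ψ₀]
      have hb : (F₀ + ‖F₁‖) * ε ^ 3 ≤ (K - C) * (ε * e) := by
        rcases le_or_gt (F₀ + ‖F₁‖) 0 with h | h
        · have h0 : (0:ℝ) ≤ (K - C) * (ε * e) :=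
            mul_nonneg hKC.le (mul_nonneg hε.le he.le)
          nlinarith
        · exact le_trans (mul_le_mul_of_nonneg_right hcoef h3pos.le)
            (mul_le_mul_of_nonneg_left h37 hKC.le)
      have hb2 : C * ε ^ ((3:ℝ) - α) ≤ C * (ε * e) :=
        mul_le_mul_of_nonneg_left h3a hC.le
      nlinarith [mul_nonneg hc.le h7pos, mul_nonneg (sq_nonneg ψ₀) h3pos.le]
  · -- near case
    push_neg at hcase
    set ψ : ℝ := (η - π) / ε ^ 3 with hψdef
    have he2 : e * e = ε ^ 3 := by
      rw [hedef, ← Real.rpow_add hε, h3r]; norm_num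
    have hηeq : π + ψ * ε ^ 3 = η := by
      rw [hψdef, div_mul_cancel₀ _ h3pos.ne']; ring
    have hψb : |ψ| * e ≤ ψ₀ := by
      rw [hψdef, abs_div, abs_of_pos h3pos]
      rw [div_mul_eq_mul_div, div_le_iff₀ h3pos, ← he2]
      calc |η - π| * e ≤ (ψ₀ * e) * e := by
            exact mul_le_mul_of_nonneg_right hcase.le he.le
        _ = ψ₀ * (e * e) := by ring
    obtain ⟨h1, h2⟩ := hnear ε hε hε1 ψ hψb (hηeq ▸ hη)
    rw [hηeq] at h1 h2
    set s : ℝ := Real.sqrt (4 * π ^ 2 * ψ ^ 2 + ‖F₁‖ ^ 2) with hsdef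
    have hs : ‖F₁‖ ≤ s := by
      rw [hsdef]
      calc ‖F₁‖ = Real.sqrt (‖F₁‖ ^ 2) := by
            rw [Real.sqrt_sq habsF1]
        _ ≤ _ := Real.sqrt_le_sqrt (by nlinarith [sq_nonneg (π * ψ)])
    rw [abs_le] at h1 h2
    have hs3 : ε ^ 3 * ‖F₁‖ ≤ ε ^ 3 * s :=
      mul_le_mul_of_nonneg_left hs h3pos.le
    constructor
    · rintro ⟨hlt, -⟩
      nlinarith [h1.2]
    · rintro ⟨-, hlt⟩
      nlinarith [h2.1]
end
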